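/- Let 0 ≤ k and 2k ≤ n, and define g(n,k) = (1/[n choose k]₂) · ∑_{m=0}^{k} 2^{m²} [n−k choose m]₂ [k choose m]₂ · 2^{−m/2}. Then g(n,k) ≤ C · 2^{−k/2} where C = 9/(2(9/(2√2) − 1)) + 1. -/

import Mathlib

/-- The Gaussian binomial coefficient `[n choose k]₂`, as a real number, with the convention
that it vanishes when `k > n`. -/
noncomputable def gbinomR (n k : ℕ) : ℝ :=
  (∏ i ∈ Finset.range k, ((2 : ℝ) ^ (n - i) - 1)) /
    (∏ i ∈ Finset.range k, ((2 : ℝ) ^ (k - i) - 1))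

/-- `g(n,k) = (1/[n choose k]₂)·∑_{m=0}^k 2^{m²}·[n-k choose m]₂·[k choose m]₂·2^{-m/2}`. -/
noncomputable def gR (n k : ℕ) : ℝ :=
  (gbinomR n k)⁻¹ *
    ∑ m ∈ Finset.range (k + 1),
      2 ^ (m ^ 2) * gbinomR (n - k) m * gbinomR k m * (2 : ℝ) ^ (-(m : ℝ) / 2)

open Finset

private lemma two_le_two_pow {j : ℕ} (hj : 1 ≤ j) : (2:ℝ) ≤ 2 ^ j := by
  calc (2:ℝ) = 2 ^ 1 := (pow_one 2).symm
  _ ≤ 2 ^ j := pow_le_pow_right₀ one_le_two hj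

private lemma P_pos {a m : ℕ} (h : m ≤ a) :
    0 < ∏ i ∈ Finset.range m, ((2:ℝ) ^ (a - i) - 1) := by
  apply Finset.prod_pos
  intro i hi
  rw [Finset.mem_range] at hi
  have := two_le_two_pow (j := a - i) (by omega)
  linarith

private lemma D_pos (m : ℕ) : 0 < ∏ i ∈ Finset.range m, ((2:ℝ) ^ (m - i) - 1) :=
  P_pos le_rfl

private lemma gbinomR_pos {a m : ℕ} (h : m ≤ a) : 0 < gbinomR a m :=
  div_pos (P_pos h) (D_pos m)

private lemma D_succ (m : ℕ) :
    ∏ i ∈ Finset.range (m+1), ((2:ℝ) ^ (m+1-i) - 1)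
      = (∏ i ∈ Finset.range m, ((2:ℝ) ^ (m-i) - 1)) * (2 ^ (m+1) - 1) := by
  rw [Finset.prod_range_succ']
  congr 1
  exact Finset.prod_congr rfl fun i _ => by rw [Nat.succ_sub_succ]

private lemma gbinomR_succ (a m : ℕ) :
    gbinomR a (m+1) = gbinomR a m * ((2:ℝ) ^ (a-m) - 1) / (2 ^ (m+1) - 1) := by
  unfold gbinomR
  rw [Finset.prod_range_succ, D_succ]
  have h1 := (D_pos m).ne'
  have h2 : (2:ℝ) ^ (m+1) - 1 ≠ 0 := by
    have := two_le_two_pow (j := m+1) (by omega); linarith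
  field_simp

private lemma gbinomR_self (a : ℕ) : gbinomR a a = 1 := by
  unfold gbinomR
  exact div_self (D_pos a).ne'

/-- termwise product comparison -/
private lemma key_prod {a : ℕ} (k : ℕ) (hk : k ≤ a) :
    (2:ℝ) ^ (k^2) * ∏ i ∈ Finset.range k, ((2:ℝ) ^ (a-i) - 1)
      ≤ ∏ i ∈ Finset.range k, ((2:ℝ) ^ (a+k-i) - 1) := by
  rw [show (2:ℝ) ^ (k^2) = ∏ _i ∈ Finset.range k, (2:ℝ)^k by
      rw [Finset.prod_const, Finset.card_range, ← pow_mul]; congr 1; ring,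
    ← Finset.prod_mul_distrib]
  apply Finset.prod_le_prod
  · intro i hi
    rw [Finset.mem_range] at hi
    have h1 : (1:ℝ) ≤ 2 ^ (a-i) := one_le_pow₀ one_le_two
    have h2 : (0:ℝ) ≤ 2 ^ k := by positivity
    nlinarith
  · intro i hi
    rw [Finset.mem_range] at hi
    have he : (2:ℝ)^k * ((2:ℝ) ^ (a-i) - 1) = 2 ^ (a+k-i) - 2 ^ k := by
      rw [mul_sub, mul_one, ← pow_add]
      congr 2
      omega
    have h3 : (1:ℝ) ≤ 2 ^ k := one_le_pow₀ one_le_two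
    rw [he]; linarith

/-- auxiliary: `u n k m = 2^{m²}·[n-k,m]·[k,m]`. -/
noncomputable def uR (n k m : ℕ) : ℝ := 2 ^ (m ^ 2) * gbinomR (n - k) m * gbinomR k m

private lemma u_step {n k m : ℕ} (hm : m + 2 ≤ k) (hn : 2*k ≤ n) :
    uR n k m ≤ (2/9) * uR n k (m+1) := by
  have hA : 0 < gbinomR (n-k) m := gbinomR_pos (by omega)
  have hB : 0 < gbinomR k m := gbinomR_pos (by omega)
  set A := gbinomR (n-k) m
  set B := gbinomR k m
  have he : (0:ℝ) < 2 ^ (m+1) - 1 := by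
    have := two_le_two_pow (j := m+1) (by omega); linarith
  set e : ℝ := 2 ^ (m+1) - 1 with he_def
  have hc : (0:ℝ) < 2 ^ (m^2) := by positivity
  have hd : (0:ℝ) < (2:ℝ) ^ (2*m+1) := by positivity
  set c : ℝ := 2 ^ (m^2)
  set d : ℝ := (2:ℝ) ^ (2*m+1)
  have hy : (3:ℝ) ≤ 2 ^ (k-m) - 1 := by
    have : (4:ℝ) ≤ 2 ^ (k-m) := by
      calc (4:ℝ) = 2 ^ 2 := by norm_num
      _ ≤ 2 ^ (k-m) := pow_le_pow_right₀ one_le_two (by omega)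
    linarith
  have hx : (2:ℝ) ^ (k-m) - 1 ≤ 2 ^ ((n-k)-m) - 1 := by
    have : (2:ℝ) ^ (k-m) ≤ 2 ^ ((n-k)-m) := pow_le_pow_right₀ one_le_two (by omega)
    linarith
  set x : ℝ := 2 ^ ((n-k)-m) - 1
  set y : ℝ := 2 ^ (k-m) - 1
  have hxpos : (0:ℝ) < x := lt_of_lt_of_le (by linarith) hx
  have hypos : (0:ℝ) < y := by linarith
  have hcd : (2:ℝ) ^ ((m+1)^2) = c * d := by
    rw [← pow_add]; congr 1; ring
  have hee : e * e ≤ 2 * d := by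
    have h1 : (0:ℝ) < 2 ^ (m+1) := by positivity
    have h2 : e ≤ 2 ^ (m+1) := by
      rw [he_def]; linarith
    have h3 : ((2:ℝ) ^ (m+1)) * (2 ^ (m+1)) = 2 * d := by
      rw [← pow_add, show m+1+(m+1) = (2*m+1)+1 by ring, pow_succ]; ring
    nlinarith
  have hgoal : uR n k (m+1) = c * d * (A * x / e) * (B * y / e) := by
    unfold uR
    rw [gbinomR_succ, gbinomR_succ, hcd]
  rw [hgoal]
  have key : (2:ℝ)/9 * (c * d * (A * x / e) * (B * y / e))
      = (2/9 * (c*d) * (A*x) * (B*y)) / (e*e) := by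
    field_simp
  rw [key, le_div_iff₀ (by positivity)]
  have hxy : (9:ℝ) ≤ x * y := by nlinarith
  calc uR n k m * (e*e) = c * A * B * (e * e) := by unfold uR; ring
  _ ≤ c * A * B * (2 * d) := by
      apply mul_le_mul_of_nonneg_left hee (by positivity)
  _ = (2/9) * (c*d) * (A*B) * 9 := by ring
  _ ≤ (2/9) * (c*d) * (A*B) * (x*y) := by
      apply mul_le_mul_of_nonneg_left hxy (by positivity)
  _ = 2/9 * (c*d) * (A*x) * (B*y) := by ring

private lemma u_chain {n k : ℕ} (hn : 2*k ≤ n) :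
    ∀ j m, m + j + 1 = k → uR n k m ≤ (2/9)^j * uR n k (k-1) := by
  intro j
  induction j with
  | zero =>
    intro m hm
    have h : m = k - 1 := by omega
    simp [h]
  | succ j ih =>
    intro m hm
    have h1 : uR n k m ≤ (2/9) * uR n k (m+1) := u_step (by omega) hn
    have h2 := ih (m+1) (by omega)
    calc uR n k m ≤ 2/9 * uR n k (m+1) := h1
    _ ≤ 2/9 * ((2/9)^j * uR n k (k-1)) := by
        apply mul_le_mul_of_nonneg_left h2 (by norm_num)
    _ = (2/9)^(j+1) * uR n k (k-1) := by ring

private lemma u_k_le {n k : ℕ} (hn : 2*k ≤ n) : uR n k k ≤ gbinomR n k := by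
  unfold uR
  rw [gbinomR_self, mul_one]
  unfold gbinomR
  rw [← mul_div_assoc, div_le_div_iff₀ (D_pos k) (D_pos k)]
  apply mul_le_mul_of_nonneg_right _ (D_pos k).le
  calc (2:ℝ)^(k^2) * ∏ i ∈ Finset.range k, ((2:ℝ) ^ ((n-k)-i) - 1)
      ≤ ∏ i ∈ Finset.range k, ((2:ℝ) ^ ((n-k)+k-i) - 1) := key_prod k (by omega)
  _ = ∏ i ∈ Finset.range k, ((2:ℝ) ^ (n-i) - 1) := by
      apply Finset.prod_congr rfl
      intro i hi
      rw [Finset.mem_range] at hi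
      congr 2
      omega

private lemma u_km1_le {n k : ℕ} (hn : 2*(k+1) ≤ n) :
    uR n (k+1) k ≤ gbinomR n (k+1) := by
  have hD := D_pos k
  have he : (0:ℝ) < 2 ^ (k+1) - 1 := by
    have := two_le_two_pow (j := k+1) (by omega); linarith
  have hgb : gbinomR (k+1) k = (2:ℝ) ^ (k+1) - 1 := by
    unfold gbinomR
    have hN : ∏ i ∈ Finset.range k, ((2:ℝ) ^ (k+1-i) - 1)
        = (∏ i ∈ Finset.range k, ((2:ℝ) ^ (k-i) - 1)) * (2 ^ (k+1) - 1) := by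
      have h := D_succ k
      rw [Finset.prod_range_succ] at h
      norm_num at h
      exact h
    rw [hN, mul_comm, mul_div_assoc, div_self hD.ne', mul_one]
  unfold uR
  rw [hgb]
  unfold gbinomR
  rw [D_succ]
  have hL : (2:ℝ)^(k^2) * ((∏ i ∈ Finset.range k, ((2:ℝ) ^ ((n-(k+1))-i) - 1)) /
        (∏ i ∈ Finset.range k, ((2:ℝ) ^ (k-i) - 1))) * ((2:ℝ) ^ (k+1) - 1)
      = ((2:ℝ)^(k^2) * (∏ i ∈ Finset.range k, ((2:ℝ) ^ ((n-(k+1))-i) - 1)) * ((2:ℝ) ^ (k+1) - 1))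
        / (∏ i ∈ Finset.range k, ((2:ℝ) ^ (k-i) - 1)) := by
    ring
  rw [hL, div_le_div_iff₀ hD (by positivity)]
  have h1 : (2:ℝ)^(k^2) * (∏ i ∈ Finset.range k, ((2:ℝ) ^ ((n-(k+1))-i) - 1))
      ≤ ∏ i ∈ Finset.range k, ((2:ℝ) ^ (n-(i+1)) - 1) := by
    calc (2:ℝ)^(k^2) * (∏ i ∈ Finset.range k, ((2:ℝ) ^ ((n-(k+1))-i) - 1))
        ≤ ∏ i ∈ Finset.range k, ((2:ℝ) ^ ((n-(k+1))+k-i) - 1) := key_prod k (by omega)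
    _ = ∏ i ∈ Finset.range k, ((2:ℝ) ^ (n-(i+1)) - 1) := by
        apply Finset.prod_congr rfl
        intro i hi
        rw [Finset.mem_range] at hi
        congr 2
        omega
  have h2 : ((2:ℝ) ^ (k+1) - 1) * ((2:ℝ) ^ (k+1) - 1) ≤ 2 ^ (n-0) - 1 := by
    have ha : ((2:ℝ) ^ (k+1)) * (2 ^ (k+1)) ≤ 2 ^ (n-0) := by
      rw [← pow_add]
      exact pow_le_pow_right₀ one_le_two (by omega)
    have hb : (2:ℝ) ≤ 2 ^ (k+1) := two_le_two_pow (by omega)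
    nlinarith
  have hPn : (0:ℝ) ≤ ∏ i ∈ Finset.range k, ((2:ℝ) ^ (n-(i+1)) - 1) := by
    apply Finset.prod_nonneg
    intro i hi
    rw [Finset.mem_range] at hi
    have := two_le_two_pow (j := n-(i+1)) (by omega)
    linarith
  have hmain : (2:ℝ)^(k^2) * (∏ i ∈ Finset.range k, ((2:ℝ) ^ ((n-(k+1))-i) - 1))
        * (((2:ℝ) ^ (k+1) - 1) * ((2:ℝ) ^ (k+1) - 1))
      ≤ ∏ i ∈ Finset.range (k+1), ((2:ℝ) ^ (n-i) - 1) := by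
    rw [Finset.prod_range_succ']
    exact mul_le_mul h1 h2 (by positivity) hPn
  calc (2:ℝ)^(k^2) * (∏ i ∈ Finset.range k, ((2:ℝ) ^ ((n-(k+1))-i) - 1)) * ((2:ℝ)^(k+1) - 1)
        * ((∏ i ∈ Finset.range k, ((2:ℝ) ^ (k-i) - 1)) * ((2:ℝ) ^ (k+1) - 1))
      = ((2:ℝ)^(k^2) * (∏ i ∈ Finset.range k, ((2:ℝ) ^ ((n-(k+1))-i) - 1))
          * (((2:ℝ) ^ (k+1) - 1) * ((2:ℝ) ^ (k+1) - 1)))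
        * (∏ i ∈ Finset.range k, ((2:ℝ) ^ (k-i) - 1)) := by ring
  _ ≤ (∏ i ∈ Finset.range (k+1), ((2:ℝ) ^ (n-i) - 1))
        * (∏ i ∈ Finset.range k, ((2:ℝ) ^ (k-i) - 1)) :=
      mul_le_mul_of_nonneg_right hmain hD.le

private lemma geom_aux {r : ℝ} (h0 : 0 ≤ r) (h1 : r < 1) (n : ℕ) :
    ∑ i ∈ Finset.range n, r ^ i ≤ (1 - r)⁻¹ := by
  have hne : r ≠ 1 := ne_of_lt h1
  have hpos : 0 < 1 - r := by linarith
  rw [geom_sum_eq hne]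
  have heq : (r ^ n - 1) / (r - 1) = (1 - r ^ n) * (1 - r)⁻¹ := by
    rw [div_eq_iff (by linarith : r - 1 ≠ 0)]
    field_simp
    ring
  rw [heq]
  have hrn : 0 ≤ r ^ n := pow_nonneg h0 n
  nlinarith [inv_nonneg.mpr hpos.le, inv_mul_cancel₀ hpos.ne']


/-- For `0 ≤ k` and `2k ≤ n`,
`g(n,k) ≤ C·2^{-k/2}` where `C = 9/(2(9/(2√2) - 1)) + 1`. -/
theorem gR_le {n k : ℕ} (hn : 2 * k ≤ n) :
    gR n k ≤ (9 / (2 * (9 / (2 * Real.sqrt 2) - 1)) + 1) * (2 : ℝ) ^ (-(k : ℝ) / 2) := by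
  have hs2 : Real.sqrt 2 < 3/2 := by
    rw [show (3:ℝ)/2 = Real.sqrt ((3/2)^2) by rw [Real.sqrt_sq]; norm_num]
    apply Real.sqrt_lt_sqrt <;> norm_num
  have hs1 : 1 < Real.sqrt 2 := by
    rw [show (1:ℝ) = Real.sqrt 1 by simp]
    apply Real.sqrt_lt_sqrt <;> norm_num
  have hs0 : (0:ℝ) < Real.sqrt 2 := by linarith
  have hsq : Real.sqrt 2 * Real.sqrt 2 = 2 := Real.mul_self_sqrt (by norm_num)
  set r : ℝ := 2 * Real.sqrt 2 / 9 with hrdef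
  have hr0 : 0 ≤ r := by positivity
  have hr1 : r < 1 := by rw [hrdef, div_lt_one (by norm_num)]; nlinarith
  have hCval : Real.sqrt 2 * (1 - r)⁻¹ = 9 / (2 * (9 / (2 * Real.sqrt 2) - 1)) := by
    have h1 : (0:ℝ) < 1 - r := by linarith
    have h2 : (0:ℝ) < 9 / (2 * Real.sqrt 2) - 1 := by
      rw [lt_sub_iff_add_lt, zero_add, lt_div_iff₀ (by positivity)]; nlinarith
    have h3 : (9:ℝ) - 2 * Real.sqrt 2 ≠ 0 := by nlinarith
    rw [hrdef] at h1 ⊢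
    rw [show (1:ℝ) - 2 * Real.sqrt 2 / 9 = (9 - 2 * Real.sqrt 2)/9 by ring]
    rw [show 9 / (2 * Real.sqrt 2) - 1 = (9 - 2 * Real.sqrt 2)/(2 * Real.sqrt 2) by
      field_simp]
    field_simp
  have hCpos : (0:ℝ) < 9 / (2 * (9 / (2 * Real.sqrt 2) - 1)) := by
    rw [← hCval]
    have h1 : (0:ℝ) < 1 - r := by linarith
    positivity
  by_cases hk0 : k = 0
  · subst hk0
    have h0 : gR n 0 = 1 := by
      simp [gR, gbinomR]
    have h1 : (2:ℝ) ^ (-((0:ℕ) : ℝ) / 2) = 1 := by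
      norm_num
    rw [h0, h1, mul_one]
    linarith
  obtain ⟨K, rfl⟩ : ∃ K, k = K + 1 := ⟨k - 1, by omega⟩
  set k := K + 1 with hk
  have h2kn : 2 * k ≤ n := hn
  have hB : 0 < gbinomR n k := gbinomR_pos (by omega)
  have hterm_k : (gbinomR n k)⁻¹ * (uR n k k * (2:ℝ) ^ (-(k:ℝ)/2))
      ≤ (2:ℝ) ^ (-(k:ℝ)/2) := by
    have h1 : uR n k k ≤ gbinomR n k := u_k_le h2kn
    have h2 : (0:ℝ) < (2:ℝ) ^ (-(k:ℝ)/2) := Real.rpow_pos_of_pos (by norm_num) _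
    rw [inv_mul_le_iff₀ hB]
    exact mul_le_mul_of_nonneg_right h1 h2.le
  have hterm_m : ∀ m ∈ Finset.range k,
      (gbinomR n k)⁻¹ * (uR n k m * (2:ℝ) ^ (-(m:ℝ)/2))
        ≤ (2/9:ℝ)^(k-1-m) * (2:ℝ) ^ (-(m:ℝ)/2) := by
    intro m hm
    rw [Finset.mem_range] at hm
    have h1 : uR n k m ≤ (2/9)^(k-1-m) * uR n k (k-1) :=
      u_chain h2kn (k-1-m) m (by omega)
    have h2 : uR n k (k-1) ≤ gbinomR n k := by
      have h := u_km1_le (n := n) (k := K) (by omega)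
      simpa [hk] using h
    have h3 : uR n k m ≤ (2/9:ℝ)^(k-1-m) * gbinomR n k := by
      calc uR n k m ≤ (2/9)^(k-1-m) * uR n k (k-1) := h1
      _ ≤ (2/9)^(k-1-m) * gbinomR n k :=
          mul_le_mul_of_nonneg_left h2 (by positivity)
    have h4 : (0:ℝ) < (2:ℝ) ^ (-(m:ℝ)/2) := Real.rpow_pos_of_pos (by norm_num) _
    rw [inv_mul_le_iff₀ hB]
    calc uR n k m * (2:ℝ) ^ (-(m:ℝ)/2)
        ≤ ((2/9:ℝ)^(k-1-m) * gbinomR n k) * (2:ℝ) ^ (-(m:ℝ)/2) :=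
          mul_le_mul_of_nonneg_right h3 h4.le
    _ = gbinomR n k * ((2/9:ℝ)^(k-1-m) * (2:ℝ) ^ (-(m:ℝ)/2)) := by ring
  -- geometric sum bound
  have hhalf : (2:ℝ) ^ ((1:ℝ)/2) = Real.sqrt 2 := (Real.sqrt_eq_rpow 2).symm
  have hsum : ∑ m ∈ Finset.range k, (2/9 : ℝ)^(k-1-m) * (2:ℝ) ^ (-(m:ℝ)/2)
      ≤ Real.sqrt 2 * (1-r)⁻¹ * (2:ℝ) ^ (-(k:ℝ)/2) := by
    have hterm : ∀ j ∈ Finset.range k,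
        (2/9 : ℝ)^(k-1-(k-1-j)) * (2:ℝ) ^ (-(((k-1-j : ℕ)):ℝ)/2)
          = (2:ℝ) ^ (-((k:ℝ)-1)/2) * r^j := by
      intro j hj
      rw [Finset.mem_range] at hj
      have e1 : k-1-(k-1-j) = j := by omega
      have e2 : (((k-1-j : ℕ)):ℝ) = (k:ℝ) - 1 - j := by
        have h : (k - 1 - j : ℕ) = k - (1 + j) := by omega
        rw [h, Nat.cast_sub (by omega : 1 + j ≤ k)]
        push_cast
        ring
      rw [e1, e2]
      have e3 : (-((k:ℝ) - 1 - j)/2) = (-((k:ℝ)-1)/2) + (j:ℝ)/2 := by ring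
      rw [e3, Real.rpow_add (by norm_num : (0:ℝ) < 2)]
      have e4 : (2:ℝ) ^ ((j:ℝ)/2) = (Real.sqrt 2)^j := by
        rw [show ((j:ℝ)/2) = (1/2 : ℝ) * (j:ℕ) by push_cast; ring,
          Real.rpow_mul (by norm_num : (0:ℝ) ≤ 2), show ((1:ℝ)/2) = (1:ℝ)/2 from rfl,
          hhalf, Real.rpow_natCast]
      rw [e4]
      have e5 : (2/9 : ℝ)^j * (Real.sqrt 2)^j = r^j := by
        rw [← mul_pow, hrdef]
        congr 1
        ring
      calc (2/9 : ℝ)^j * ((2:ℝ) ^ (-((k:ℝ)-1)/2) * (Real.sqrt 2)^j)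
          = (2:ℝ) ^ (-((k:ℝ)-1)/2) * ((2/9 : ℝ)^j * (Real.sqrt 2)^j) := by ring
      _ = (2:ℝ) ^ (-((k:ℝ)-1)/2) * r^j := by rw [e5]
    have hgeom : ∑ j ∈ Finset.range k, r^j ≤ (1-r)⁻¹ := geom_aux hr0 hr1 k
    have hp : (0:ℝ) < (2:ℝ) ^ (-((k:ℝ)-1)/2) := Real.rpow_pos_of_pos (by norm_num) _
    have hsplit : (2:ℝ) ^ (-((k:ℝ)-1)/2) = Real.sqrt 2 * (2:ℝ) ^ (-(k:ℝ)/2) := by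
      rw [show (-((k:ℝ)-1)/2) = (1:ℝ)/2 + (-(k:ℝ)/2) by ring,
        Real.rpow_add (by norm_num : (0:ℝ) < 2), hhalf]
    calc ∑ m ∈ Finset.range k, (2/9 : ℝ)^(k-1-m) * (2:ℝ) ^ (-(m:ℝ)/2)
        = ∑ j ∈ Finset.range k,
            (2/9 : ℝ)^(k-1-(k-1-j)) * (2:ℝ) ^ (-(((k-1-j : ℕ)):ℝ)/2) :=
          (Finset.sum_range_reflect _ k).symm
    _ = ∑ j ∈ Finset.range k, (2:ℝ) ^ (-((k:ℝ)-1)/2) * r^j :=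
          Finset.sum_congr rfl hterm
    _ = (2:ℝ) ^ (-((k:ℝ)-1)/2) * ∑ j ∈ Finset.range k, r^j := by
          rw [Finset.mul_sum]
    _ ≤ (2:ℝ) ^ (-((k:ℝ)-1)/2) * (1-r)⁻¹ :=
          mul_le_mul_of_nonneg_left hgeom hp.le
    _ = Real.sqrt 2 * (1-r)⁻¹ * (2:ℝ) ^ (-(k:ℝ)/2) := by
          rw [hsplit]; ring
  have hexp : gR n k = ∑ m ∈ Finset.range (k+1),
      (gbinomR n k)⁻¹ * (uR n k m * (2:ℝ) ^ (-(m:ℝ)/2)) := by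
    unfold gR uR
    rw [Finset.mul_sum]
  calc gR n k
      = ∑ m ∈ Finset.range (k+1),
          (gbinomR n k)⁻¹ * (uR n k m * (2:ℝ) ^ (-(m:ℝ)/2)) := hexp
  _ = (∑ m ∈ Finset.range k,
          (gbinomR n k)⁻¹ * (uR n k m * (2:ℝ) ^ (-(m:ℝ)/2)))
        + (gbinomR n k)⁻¹ * (uR n k k * (2:ℝ) ^ (-(k:ℝ)/2)) :=
      Finset.sum_range_succ _ k
  _ ≤ (∑ m ∈ Finset.range k, (2/9:ℝ)^(k-1-m) * (2:ℝ) ^ (-(m:ℝ)/2))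
        + (2:ℝ) ^ (-(k:ℝ)/2) :=
      add_le_add (Finset.sum_le_sum hterm_m) hterm_k
  _ ≤ Real.sqrt 2 * (1-r)⁻¹ * (2:ℝ) ^ (-(k:ℝ)/2) + (2:ℝ) ^ (-(k:ℝ)/2) :=
      add_le_add_left hsum _
  _ = (Real.sqrt 2 * (1-r)⁻¹ + 1) * (2:ℝ) ^ (-(k:ℝ)/2) := by ring
  _ = (9 / (2 * (9 / (2 * Real.sqrt 2) - 1)) + 1) * (2:ℝ) ^ (-(k:ℝ)/2) := by
      rw [hCval]
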